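/- (Limits involving lower and upper functions.) Let B be a Brownian motion. If φ₁ is a continuous lower function, then limsup_{t→∞} (B_t − φ₁(t)) = ∞ almost surely; and if φ₂ is a continuous upper function, then limsup_{t→∞} (B_t − φ₂(t)) = −∞ almost surely. -/

import Mathlib

open MeasureTheory ProbabilityTheory Filter Set
open scoped NNReal ENNReal Topology

noncomputable section

namespace PaperNK

variable {Ω : Type*} {m : MeasurableSpace Ω}

/-- A (real-valued) process is a local martingale if there is a localizing sequence of
stopping times increasing to infinity such that every stopped process is a martingale. -/
def IsLocalMartingale (ℱ : Filtration ℝ≥0 m) (μ : Measure Ω) (X : ℝ≥0 → Ω → ℝ) : Prop :=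
  ∃ σ : ℕ → Ω → ℝ≥0,
    (∀ n, IsStoppingTime ℱ (fun ω => (σ n ω : WithTop ℝ≥0))) ∧
    (∀ ω, Tendsto (fun n => σ n ω) atTop atTop) ∧
    (∀ n, Martingale (stoppedProcess X (fun ω => (σ n ω : WithTop ℝ≥0))) ℱ μ)

/-- `X` is a local martingale on the stochastic interval `[0, ρ)`: for every stopping
time `σ` with `σ < ρ` everywhere, the stopped process `X^σ` is a local martingale. -/
def IsLocalMartingaleOn (ℱ : Filtration ℝ≥0 m) (μ : Measure Ω)
    (X : ℝ≥0 → Ω → ℝ) (ρ : Ω → ℝ≥0∞) : Prop :=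
  ∀ σ : Ω → ℝ≥0, IsStoppingTime ℱ (fun ω => (σ ω : WithTop ℝ≥0)) → (∀ ω, (σ ω : ℝ≥0∞) < ρ ω) →
    IsLocalMartingale ℱ μ (stoppedProcess X (fun ω => (σ ω : WithTop ℝ≥0)))

/-- All paths of `X` are continuous on the stochastic interval `[0, ρ)`. -/
def ContPathsOn (X : ℝ≥0 → Ω → ℝ) (ρ : Ω → ℝ≥0∞) : Prop :=
  ∀ ω, ContinuousOn (fun t => X t ω) {t : ℝ≥0 | (t : ℝ≥0∞) < ρ ω}

/-- `Q` is the quadratic variation `⟨L⟩` of the continuous local martingale `L` on the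
stochastic interval `[0, ρ)`: it starts at `0`, is adapted, nondecreasing and continuous
on `[0, ρ)`, and `L ^ 2 - Q` is a local martingale on `[0, ρ)`. -/
def IsQuadraticVariationOn (ℱ : Filtration ℝ≥0 m) (μ : Measure Ω)
    (L Q : ℝ≥0 → Ω → ℝ) (ρ : Ω → ℝ≥0∞) : Prop :=
  (∀ ω, Q 0 ω = 0) ∧ Adapted ℱ Q ∧
    (∀ ω, MonotoneOn (fun t => Q t ω) {t : ℝ≥0 | (t : ℝ≥0∞) < ρ ω}) ∧
    ContPathsOn Q ρ ∧
    IsLocalMartingaleOn ℱ μ (fun t ω => L t ω ^ 2 - Q t ω) ρ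

/-- First hitting time of the level `c` by the process `X` (with value `∞` if `c` is never hit). -/
def firstHit (X : ℝ≥0 → Ω → ℝ) (c : ℝ) (ω : Ω) : ℝ≥0∞ :=
  sInf {t : ℝ≥0∞ | ∃ s : ℝ≥0, (s : ℝ≥0∞) = t ∧ X s ω = c}

/-- The data of a continuous nonnegative local martingale `Z = 𝓔(L) = exp (L - Q / 2)` with
`Z_0 = 1`, where `L` is a continuous local martingale on `[0, T_0)` with `L_0 = 0`, `Q = ⟨L⟩`
is its quadratic variation, and `T_0` is the first hitting time of zero by `Z`; `Z` is
extended continuously (by the value `0`) after `T_0`. -/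
structure StochExpSetup (ℱ : Filtration ℝ≥0 m) (μ : Measure Ω)
    (L Q Z : ℝ≥0 → Ω → ℝ) : Prop where
  nonneg : ∀ (t : ℝ≥0) (ω : Ω), 0 ≤ Z t ω
  init : ∀ ω : Ω, Z 0 ω = 1
  contZ : ∀ ω : Ω, Continuous fun t => Z t ω
  adaptedZ : Adapted ℱ Z
  locmartZ : IsLocalMartingale ℱ μ Z
  initL : ∀ ω : Ω, L 0 ω = 0
  locmartL : IsLocalMartingaleOn ℱ μ L fun ω => firstHit Z 0 ω
  contL : ContPathsOn L fun ω => firstHit Z 0 ω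
  quadvar : IsQuadraticVariationOn ℱ μ L Q fun ω => firstHit Z 0 ω
  expEq : ∀ (t : ℝ≥0) (ω : Ω), (t : ℝ≥0∞) < firstHit Z 0 ω →
    Z t ω = Real.exp (L t ω - Q t ω / 2)
  absorbed : ∀ (t : ℝ≥0) (ω : Ω), firstHit Z 0 ω ≤ (t : ℝ≥0∞) → Z t ω = 0

/-- The class `𝒯` of stopping times: `τ ∈ 𝒯` iff `τ ≤ (T - 1/n) ⊓ n` for some `n ∈ ℕ`. -/
def MemT (ℱ : Filtration ℝ≥0 m) (T : ℝ≥0∞) (τ : Ω → ℝ≥0) : Prop :=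
  IsStoppingTime ℱ (fun ω => (τ ω : WithTop ℝ≥0)) ∧ ∃ n : ℕ, 0 < n ∧ ∀ ω, (τ ω : ℝ≥0∞) ≤ (T - 1 / n) ⊓ n

/-- `Z` is a (true) martingale on the time interval `[0, T]`. -/
def IsMartingaleOn (ℱ : Filtration ℝ≥0 m) (μ : Measure Ω)
    (Z : ℝ≥0 → Ω → ℝ) (T : ℝ≥0∞) : Prop :=
  (∀ t : ℝ≥0, (t : ℝ≥0∞) ≤ T → Integrable (Z t) μ ∧ StronglyMeasurable[ℱ t] (Z t)) ∧
  ∀ s t : ℝ≥0, s ≤ t → (t : ℝ≥0∞) ≤ T → μ[Z t|ℱ s] =ᵐ[μ] Z s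

/-- `Z` is a uniformly integrable martingale on the time interval `[0, T]`. -/
def IsUIMartingaleOn (ℱ : Filtration ℝ≥0 m) (μ : Measure Ω)
    (Z : ℝ≥0 → Ω → ℝ) (T : ℝ≥0∞) : Prop :=
  IsMartingaleOn ℱ μ Z T ∧
  UniformIntegrable (fun t : {t : ℝ≥0 // (t : ℝ≥0∞) ≤ T} => Z t.1) 1 μ

/-- `X` is a submartingale on the time interval `[0, T]`. -/
def IsSubmartingaleOn (ℱ : Filtration ℝ≥0 m) (μ : Measure Ω)
    (X : ℝ≥0 → Ω → ℝ) (T : ℝ≥0∞) : Prop :=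
  (∀ t : ℝ≥0, (t : ℝ≥0∞) ≤ T → Integrable (X t) μ ∧ StronglyMeasurable[ℱ t] (X t)) ∧
  ∀ s t : ℝ≥0, s ≤ t → (t : ℝ≥0∞) ≤ T → X s ≤ᵐ[μ] μ[X t|ℱ s]

/-- `B` is a Brownian motion (starting at zero) under `μ`: continuous paths, independent
increments, and Gaussian increments `B_t - B_s ~ N(0, t - s)`. -/
structure IsBrownianMotion {Ω' : Type*} [MeasurableSpace Ω'] (μ : Measure Ω')
    (B : ℝ≥0 → Ω' → ℝ) : Prop where
  isProb : IsProbabilityMeasure μ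
  meas : ∀ t, Measurable (B t)
  start : ∀ ω, B 0 ω = 0
  cont : ∀ ω, Continuous fun t => B t ω
  indepIncr : ∀ (n : ℕ) (t : Fin (n + 1) → ℝ≥0), Monotone t →
    iIndepFun
      (fun i : Fin n => fun ω => B (t i.succ) ω - B (t i.castSucc) ω) μ
  gaussIncr : ∀ s t : ℝ≥0, s ≤ t →
    μ.map (fun ω => B t ω - B s ω) = gaussianReal 0 (t - s)

/-- A continuous function `φ` (on `[0,∞)`) is a lower function iff
`limsup_{t → ∞} (B_t - φ(t)) = ∞` almost surely for every Brownian motion `B`. -/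
def IsLowerFunction (φ : ℝ → ℝ) : Prop :=
  ∀ (Ω' : Type) [MeasurableSpace Ω'] (μ' : Measure Ω') (B : ℝ≥0 → Ω' → ℝ),
    IsBrownianMotion μ' B →
    ∀ᵐ ω ∂μ', ∀ c : ℝ, ∃ᶠ t : ℝ≥0 in atTop, c < B t ω - φ (t : ℝ)

/-- The process `S^{L,a,φ} = exp (a L + (1/2 - a) ⟨L⟩ - |a-1| φ(⟨L⟩)) 1_{Z > 0}`. -/
def Sproc (L Q Z : ℝ≥0 → Ω → ℝ) (a : ℝ) (φ : ℝ → ℝ) (t : ℝ≥0) (ω : Ω) : ℝ :=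
  if 0 < Z t ω then Real.exp (a * L t ω + (1 / 2 - a) * Q t ω - |a - 1| * φ (Q t ω)) else 0

/-- The Novikov-Kazamaki condition `sup_{τ ∈ 𝒯} E[S^{L,a,φ}_τ] < ∞`. -/
def NKCond (ℱ : Filtration ℝ≥0 m) (μ : Measure Ω) (L Q Z : ℝ≥0 → Ω → ℝ)
    (T : ℝ≥0∞) (a : ℝ) (φ : ℝ → ℝ) : Prop :=
  (⨆ τ : {τ : Ω → ℝ≥0 // MemT ℱ T τ},
    ∫⁻ ω, ENNReal.ofReal (Sproc L Q Z a φ (τ.1 ω) ω) ∂μ) < ⊤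

/-- A Brownian motion with respect to the filtration `ℱ`: it is adapted and its
increments are independent of the past. -/
structure IsBrownianMotionFiltered (ℱ : Filtration ℝ≥0 m) (μ : Measure Ω)
    (B : ℝ≥0 → Ω → ℝ) extends IsBrownianMotion μ B : Prop where
  adapted : Adapted ℱ B
  indepPast : ∀ s t : ℝ≥0, s ≤ t →
    Indep (MeasurableSpace.comap (fun ω => B t ω - B s ω) inferInstance) (ℱ s) μ

section AuxNK

variable {ΩX : Type*} [mX : MeasurableSpace ΩX] {μX : Measure ΩX} {BX : ℝ≥0 → ΩX → ℝ}

theorem step_indep (hB : IsBrownianMotion μX BX) (s : ℝ≥0) (r : ℕ → ℝ≥0) (hr : ∀ n, s ≤ r n)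
    (n : ℕ) :
    Indep (⨆ k ∈ Finset.range (n+1),
        MeasurableSpace.comap (fun ω => BX (r k) ω - BX s ω) inferInstance)
      (MeasurableSpace.comap (fun ω => BX s ω) inferInstance) μX := by
  haveI := hB.isProb
  classical
  set T : Finset ℝ≥0 := insert 0 (insert s ((Finset.range (n+1)).image r)) with hT
  have h0T : (0:ℝ≥0) ∈ T := Finset.mem_insert_self _ _
  have hsT : s ∈ T := Finset.mem_insert_of_mem (Finset.mem_insert_self _ _)
  have hrT : ∀ k, k ∈ Finset.range (n+1) → r k ∈ T := fun k hk =>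
    Finset.mem_insert_of_mem (Finset.mem_insert_of_mem (Finset.mem_image_of_mem r hk))
  have hNpos : 0 < T.card := Finset.card_pos.mpr ⟨0, h0T⟩
  set M : ℕ := T.card - 1 with hM
  have hMN : M + 1 = T.card := Nat.succ_pred_eq_of_pos hNpos
  set w := T.orderIsoOfFin rfl with hw
  set u : ℕ → ℝ≥0 := fun i => (w ⟨min i M, by omega⟩ : ℝ≥0) with hu
  have humono : Monotone u := by
    intro a b hab
    exact Subtype.coe_le_coe.mpr (w.monotone (by simp only [Fin.mk_le_mk]; omega))
  have huinj : ∀ a b, a ≤ M → b ≤ M → u a = u b → a = b := by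
    intro a b ha hb hab
    have h2 : w ⟨min a M, by omega⟩ = w ⟨min b M, by omega⟩ := Subtype.coe_injective hab
    have h3 := w.injective h2
    simp only [Fin.mk.injEq] at h3
    omega
  have hidx : ∀ a (ha : a ∈ T), ∃ j : ℕ, j ≤ M ∧ u j = a := by
    intro a ha
    refine ⟨(w.symm ⟨a, ha⟩ : Fin T.card), by have := (w.symm ⟨a, ha⟩).isLt; omega, ?_⟩
    have h1 : min ((w.symm ⟨a, ha⟩ : Fin T.card) : ℕ) M = (w.symm ⟨a, ha⟩ : Fin T.card) := by
      have := (w.symm ⟨a, ha⟩).isLt; omega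
    simp only [hu, h1]
    have h4 : (⟨((w.symm ⟨a, ha⟩ : Fin T.card) : ℕ), by omega⟩ : Fin T.card) = w.symm ⟨a, ha⟩ :=
      Fin.ext rfl
    rw [h4, OrderIso.apply_symm_apply]
  have hu0 : u 0 = 0 := by
    obtain ⟨j, hj, hju⟩ := hidx 0 h0T
    exact le_antisymm (hju ▸ humono (Nat.zero_le j)) (by positivity)
  obtain ⟨iS, hiSM, hiSu⟩ := hidx s hsT
  set g : ℕ → ΩX → ℝ := fun k ω => BX (u (k+1)) ω - BX (u k) ω with hg
  have htel : ∀ (j : ℕ) (ω : ΩX), ∑ k ∈ Finset.range j, g k ω = BX (u j) ω := by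
    intro j ω
    rw [Finset.sum_range_sub (fun k => BX (u k) ω) j]
    simp [hu0, hB.start ω]
  have hIncr : iIndepFun
      (fun i : Fin M => g (i : ℕ)) μX := by
    have h2 := hB.indepIncr M (fun j : Fin (M+1) => u (j : ℕ)) (fun a b hab => humono hab)
    have h3 : (fun i : Fin M => fun ω =>
        BX (u ((i.succ : Fin (M+1)) : ℕ)) ω - BX (u ((i.castSucc : Fin (M+1)) : ℕ)) ω)
        = fun i : Fin M => g (i : ℕ) := by
      funext i ω
      simp [hg, Fin.val_succ, Fin.coe_castSucc]
    rwa [h3] at h2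
  have hgm : ∀ i : Fin M, Measurable (g (i : ℕ)) := fun i => (hB.meas _).sub (hB.meas _)
  have hIndepSets := indep_iSup_of_disjoint (m := fun i : Fin M =>
      MeasurableSpace.comap (g (i : ℕ)) inferInstance)
    (fun i => (hgm i).comap_le) hIncr
    (S := {i : Fin M | iS ≤ (i : ℕ)}) (T := {i : Fin M | (i : ℕ) < iS})
    (by rw [Set.disjoint_left]; rintro i hi1 hi2; simp only [Set.mem_setOf_eq] at hi1 hi2; omega)
  refine indep_of_indep_of_le_right (indep_of_indep_of_le_left hIndepSets ?_) ?_
  · -- left: ⨆ k ∈ range (n+1), comap (G k) ≤ ⨆ i ∈ S, comap (g i)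
    refine iSup₂_le fun k hk => ?_
    obtain ⟨jK, hjKM, hjKu⟩ := hidx (r k) (hrT k hk)
    have hiSjK : iS ≤ jK := by
      by_contra hlt
      push_neg at hlt
      have h5 : u jK ≤ u iS := humono (le_of_lt hlt)
      rw [hjKu, hiSu] at h5
      have h6 : r k = s := le_antisymm h5 (hr k)
      have := huinj jK iS hjKM hiSM (by rw [hjKu, hiSu, h6])
      omega
    have hsum : (fun ω => BX (r k) ω - BX s ω) = fun ω => ∑ j ∈ Finset.Ico iS jK, g j ω := by
      funext ω
      rw [Finset.sum_Ico_eq_sub _ hiSjK, htel, htel, hiSu, hjKu]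
    rw [hsum]
    refine Measurable.comap_le ?_
    refine Finset.measurable_sum _ (fun j hj => ?_)
    have hjM : j < M := by
      have := Finset.mem_Ico.mp hj
      omega
    refine Measurable.mono (measurable_iff_comap_le.mpr le_rfl) ?_ le_rfl
    exact le_iSup₂ (f := fun (i : Fin M) (_ : i ∈ {i : Fin M | iS ≤ (i : ℕ)}) =>
        MeasurableSpace.comap (g (i : ℕ)) inferInstance)
      (⟨j, hjM⟩ : Fin M) (Finset.mem_Ico.mp hj).1
  · -- right: comap (BX s) ≤ ⨆ i ∈ T', comap (g i)
    have hsum : (fun ω => BX s ω) = fun ω => ∑ j ∈ Finset.range iS, g j ω := by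
      funext ω
      rw [htel, hiSu]
    rw [hsum]
    refine Measurable.comap_le ?_
    refine Finset.measurable_sum _ (fun j hj => ?_)
    have hjM : j < M := by
      have := Finset.mem_range.mp hj
      omega
    refine Measurable.mono (measurable_iff_comap_le.mpr le_rfl) ?_ le_rfl
    exact le_iSup₂ (f := fun (i : Fin M) (_ : i ∈ {i : Fin M | (i : ℕ) < iS}) =>
        MeasurableSpace.comap (g (i : ℕ)) inferInstance)
      (⟨j, hjM⟩ : Fin M) (Finset.mem_range.mp hj)

theorem indepFun_incr (hB : IsBrownianMotion μX BX) (s : ℝ≥0) (r : ℕ → ℝ≥0) (hr : ∀ n, s ≤ r n) :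
    IndepFun (fun ω (n : ℕ) => BX (r n) ω - BX s ω) (fun ω => BX s ω) μX := by
  haveI := hB.isProb
  have hGm : ∀ n : ℕ, Measurable fun ω => BX (r n) ω - BX s ω :=
    fun n => (hB.meas _).sub (hB.meas s)
  have hmono : Monotone (fun n : ℕ => ⨆ k ∈ Finset.range (n+1),
      MeasurableSpace.comap (fun ω => BX (r k) ω - BX s ω) inferInstance) := by
    intro a b hab
    exact iSup₂_le fun k hk => le_iSup₂ (f := fun (k : ℕ) (_ : k ∈ Finset.range (b+1)) =>
      MeasurableSpace.comap (fun ω => BX (r k) ω - BX s ω) inferInstance) k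
      (Finset.mem_range.mpr (by have := Finset.mem_range.mp hk; omega))
  have hsup := indep_iSup_of_monotone (μ := μX)
    (m := fun n : ℕ => ⨆ k ∈ Finset.range (n+1),
      MeasurableSpace.comap (fun ω => BX (r k) ω - BX s ω) inferInstance)
    (m1 := MeasurableSpace.comap (fun ω => BX s ω) inferInstance)
    (fun n => step_indep hB s r hr n)
    (fun n => iSup₂_le fun k _ => (hGm k).comap_le)
    ((hB.meas s).comap_le) hmono
  have hEq : (⨆ n : ℕ, ⨆ k ∈ Finset.range (n+1),
      MeasurableSpace.comap (fun ω => BX (r k) ω - BX s ω) inferInstance)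
      = ⨆ k : ℕ, MeasurableSpace.comap (fun ω => BX (r k) ω - BX s ω) inferInstance := by
    refine le_antisymm (iSup_le fun n => iSup₂_le fun k _ => le_iSup
      (fun k => MeasurableSpace.comap (fun ω => BX (r k) ω - BX s ω) inferInstance) k) ?_
    refine iSup_le fun k => ?_
    refine le_iSup_of_le k ?_
    exact le_iSup₂ (f := fun (j : ℕ) (_ : j ∈ Finset.range (k+1)) =>
      MeasurableSpace.comap (fun ω => BX (r j) ω - BX s ω) inferInstance) k
      (Finset.mem_range.mpr (by omega))
  rw [hEq] at hsup
  have hpi : MeasurableSpace.comap (fun ω (n : ℕ) => BX (r n) ω - BX s ω)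
      (MeasurableSpace.pi : MeasurableSpace (ℕ → ℝ))
      = ⨆ k : ℕ, MeasurableSpace.comap (fun ω => BX (r k) ω - BX s ω) inferInstance := by
    rw [MeasurableSpace.pi, MeasurableSpace.comap_iSup]
    congr 1
    funext i
    rw [MeasurableSpace.comap_comp]
    rfl
  exact (hpi.symm ▸ hsup : _)

/-- enumeration of a countable dense subset of `[s, ∞)` in `ℝ≥0`. -/
def rr (s : ℝ≥0) (n : ℕ) : ℝ≥0 := s + Real.toNNReal ((Denumerable.eqv ℚ).symm n : ℚ)

lemma le_rr (s : ℝ≥0) (n : ℕ) : s ≤ rr s n := le_self_add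

lemma exists_rr (s t : ℝ≥0) (hst : s ≤ t) (δ : ℝ) (hδ : 0 < δ) :
    ∃ n, (t:ℝ) < rr s n ∧ ((rr s n : ℝ≥0) : ℝ) < t + δ := by
  obtain ⟨q, hq1, hq2⟩ := exists_rat_btwn (show (t:ℝ) - s < (t:ℝ) - s + δ by linarith)
  obtain ⟨n, hn⟩ := (Denumerable.eqv ℚ).symm.surjective q
  have hts : (0:ℝ) ≤ (t:ℝ) - s := sub_nonneg.mpr (NNReal.coe_le_coe.mpr hst)
  have hq0 : (0:ℝ) < (q:ℝ) := lt_of_le_of_lt hts hq1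
  have hcoe : ((rr s n : ℝ≥0) : ℝ) = (s:ℝ) + q := by
    rw [rr, NNReal.coe_add, hn, Real.coe_toNNReal _ hq0.le]
  exact ⟨n, by rw [hcoe]; linarith, by rw [hcoe]; linarith⟩

lemma dense_le {f : ℝ≥0 → ℝ} (hf : Continuous f) (s M : ℝ≥0) (c : ℝ)
    (h : ∀ n, M ≤ rr s n → f (rr s n) ≤ c) (t : ℝ≥0) (hst : s ≤ t) (hMt : M ≤ t) :
    f t ≤ c := by
  by_contra h'
  push_neg at h'
  set ε := (f t - c) / 2 with hε
  have hεpos : 0 < ε := by simp [hε]; linarith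
  obtain ⟨δ, hδ, hball⟩ := Metric.continuousAt_iff.mp (hf.continuousAt (x := t)) ε hεpos
  obtain ⟨n, hn1, hn2⟩ := exists_rr s t hst δ hδ
  have hMn : M ≤ rr s n := le_trans hMt (by exact_mod_cast hn1.le)
  have hd : dist (rr s n) t < δ := by
    rw [NNReal.dist_eq, abs_of_nonneg (by linarith)]
    linarith
  have h2 := hball hd
  rw [Real.dist_eq, abs_lt] at h2
  have h3 := h n hMn
  have h4 := h2.1
  simp only [hε] at h4 hεpos ⊢
  linarith

lemma cont_sub_phi {φ : ℝ → ℝ} (hφ : ContinuousOn φ (Ici 0)) {b : ℝ≥0 → ℝ}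
    (hb : Continuous b) : Continuous fun t : ℝ≥0 => b t - φ (t:ℝ) :=
  hb.sub (hφ.comp_continuous NNReal.continuous_coe fun x => mem_Ici.mpr x.coe_nonneg)

lemma law_Bs (hB : IsBrownianMotion μX BX) (s : ℝ≥0) :
    μX.map (fun ω => BX s ω) = gaussianReal 0 s := by
  have h := hB.gaussIncr 0 s (by positivity)
  simpa [hB.start, tsub_zero] using h

lemma gauss_Icc_bound (s : ℝ≥0) (hs : s ≠ 0) (a b : ℝ) :
    gaussianReal 0 s (Set.Icc a b)
      ≤ ENNReal.ofReal ((Real.sqrt (2*Real.pi*s))⁻¹) * ENNReal.ofReal (b - a) := by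
  rw [gaussianReal_apply 0 hs]
  calc ∫⁻ x in Set.Icc a b, gaussianPDF 0 s x
      ≤ ∫⁻ _ in Set.Icc a b, ENNReal.ofReal ((Real.sqrt (2*Real.pi*s))⁻¹) := by
        refine lintegral_mono fun x => ?_
        rw [gaussianPDF_def]
        refine ENNReal.ofReal_le_ofReal ?_
        rw [gaussianPDFReal]
        refine mul_le_of_le_one_right (by positivity) ?_
        rw [Real.exp_le_one_iff, neg_div]
        have : (0:ℝ) ≤ (x - 0)^2 / (2*s) := by positivity
        linarith
    _ = ENNReal.ofReal ((Real.sqrt (2*Real.pi*s))⁻¹) * volume (Set.Icc a b) :=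
        setLIntegral_const _ _
    _ = ENNReal.ofReal ((Real.sqrt (2*Real.pi*s))⁻¹) * ENNReal.ofReal (b - a) := by
        rw [Real.volume_Icc]

lemma key (hB : IsBrownianMotion μX BX) {φ : ℝ → ℝ} (hφ : ContinuousOn φ (Ici 0))
    {c c' : ℝ} (hcc : c' < c) :
    μX {ω | (∀ᶠ t : ℝ≥0 in atTop, BX t ω - φ (t:ℝ) ≤ c) ∧
           (∃ᶠ t : ℝ≥0 in atTop, c' < BX t ω - φ (t:ℝ))} = 0 := by
  haveI := hB.isProb
  have hKs : ∀ s : ℝ≥0, s ≠ 0 →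
      μX {ω | (∀ᶠ t : ℝ≥0 in atTop, BX t ω - φ (t:ℝ) ≤ c) ∧
           (∃ᶠ t : ℝ≥0 in atTop, c' < BX t ω - φ (t:ℝ))}
        ≤ ENNReal.ofReal ((Real.sqrt (2*Real.pi*s))⁻¹) * ENNReal.ofReal (2*(c - c')) := by
    intro s hs
    set r : ℕ → ℝ≥0 := rr s with hrdef
    have hr : ∀ n, s ≤ r n := le_rr s
    set G : ΩX → ℕ → ℝ := fun ω n => BX (r n) ω - BX s ω with hGdef
    set F : ΩX → ℝ := fun ω => BX s ω with hFdef
    have hGm : Measurable G :=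
      measurable_pi_lambda _ fun n => (hB.meas _).sub (hB.meas s)
    have hFm : Measurable F := hB.meas s
    have hindep : IndepFun G F μX := indepFun_incr hB s r hr
    set Q : ℝ → Set ((ℕ → ℝ) × ℝ) := fun d =>
      ⋃ m : ℕ, ⋂ n : ℕ, {p : (ℕ → ℝ) × ℝ | (m:ℝ≥0) ≤ r n → p.2 + p.1 n ≤ φ (r n) + d}
      with hQdef
    have hQmeas : ∀ d, MeasurableSet (Q d) := by
      intro d
      refine MeasurableSet.iUnion fun m => MeasurableSet.iInter fun n => ?_
      by_cases hmn : (m:ℝ≥0) ≤ r n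
      · simp only [hmn, true_implies]
        exact measurableSet_le
          (measurable_snd.add ((measurable_pi_apply n).comp measurable_fst)) measurable_const
      · simp only [hmn, false_implies, setOf_true]
        exact MeasurableSet.univ
    set S : Set ((ℕ → ℝ) × ℝ) := Q c ∩ (Q c')ᶜ with hSdef
    have hSmeas : MeasurableSet S := (hQmeas c).inter (hQmeas c').compl
    have hsub : {ω | (∀ᶠ t : ℝ≥0 in atTop, BX t ω - φ (t:ℝ) ≤ c) ∧
           (∃ᶠ t : ℝ≥0 in atTop, c' < BX t ω - φ (t:ℝ))}
        ⊆ (fun ω => (G ω, F ω)) ⁻¹' S := by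
      rintro ω ⟨h1, h2⟩
      constructor
      · rw [eventually_atTop] at h1
        obtain ⟨T, hT⟩ := h1
        refine mem_iUnion.mpr ⟨⌈(T:ℝ)⌉₊, mem_iInter.mpr fun n => ?_⟩
        intro hmn
        have hTceil : T ≤ (⌈(T:ℝ)⌉₊ : ℝ≥0) := by
          rw [← NNReal.coe_le_coe]
          exact_mod_cast Nat.le_ceil (T:ℝ)
        have h7 := hT (r n) (le_trans hTceil hmn)
        show BX s ω + (BX (r n) ω - BX s ω) ≤ φ (r n) + c
        linarith
      · intro hmem
        obtain ⟨m, hm⟩ := mem_iUnion.mp hmem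
        have hev : ∀ t : ℝ≥0, (m:ℝ≥0) ⊔ s ≤ t → BX t ω - φ (t:ℝ) ≤ c' := by
          intro t ht
          refine dense_le (cont_sub_phi hφ (hB.cont ω)) s ((m:ℝ≥0) ⊔ s) c' ?_ t
            (le_trans le_sup_right ht) ht
          intro n hn
          have h5 : BX s ω + (BX (rr s n) ω - BX s ω) ≤ φ (rr s n) + c' :=
            mem_iInter.mp hm n (le_trans le_sup_left hn)
          show BX (rr s n) ω - φ (rr s n) ≤ c'
          linarith
        rw [frequently_atTop] at h2
        obtain ⟨t, ht1, ht2⟩ := h2 ((m:ℝ≥0) ⊔ s)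
        exact absurd (hev t ht1) (not_le.mpr ht2)
    have hslice : ∀ g : ℕ → ℝ, gaussianReal 0 s (Prod.mk g ⁻¹' S)
        ≤ ENNReal.ofReal ((Real.sqrt (2*Real.pi*s))⁻¹) * ENNReal.ofReal (2*(c - c')) := by
      intro g
      by_cases hne : (Prod.mk g ⁻¹' S).Nonempty
      · obtain ⟨b₀, hb₀⟩ := hne
        have key2 : ∀ b1 b2 : ℝ, (g, b1) ∈ S → (g, b2) ∈ S → b2 ≤ b1 + (c - c') := by
          intro b1 b2 hb1 hb2
          obtain ⟨hb2Q, _⟩ := hb2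
          obtain ⟨_, hb1N⟩ := hb1
          obtain ⟨m, hm⟩ := mem_iUnion.mp hb2Q
          by_contra hgt
          push_neg at hgt
          refine hb1N (mem_iUnion.mpr ⟨m, mem_iInter.mpr fun n => ?_⟩)
          intro hmn
          have h5 := mem_iInter.mp hm n hmn
          simp only [mem_setOf_eq] at h5 ⊢
          linarith
        have hsub2 : Prod.mk g ⁻¹' S ⊆ Set.Icc (b₀ - (c - c')) (b₀ + (c - c')) := by
          intro b hb
          have ha1 := key2 b b₀ hb hb₀
          have ha2 := key2 b₀ b hb₀ hb
          exact ⟨by linarith, by linarith⟩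
        calc gaussianReal 0 s (Prod.mk g ⁻¹' S)
            ≤ gaussianReal 0 s (Set.Icc (b₀ - (c - c')) (b₀ + (c - c'))) :=
              measure_mono hsub2
          _ ≤ ENNReal.ofReal ((Real.sqrt (2*Real.pi*s))⁻¹)
              * ENNReal.ofReal ((b₀ + (c - c')) - (b₀ - (c - c'))) := gauss_Icc_bound s hs _ _
          _ = ENNReal.ofReal ((Real.sqrt (2*Real.pi*s))⁻¹) * ENNReal.ofReal (2*(c - c')) := by
              congr 1
              ring_nf
      · rw [not_nonempty_iff_eq_empty] at hne
        simp [hne]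
    haveI : IsProbabilityMeasure (μX.map G) := Measure.isProbabilityMeasure_map hGm.aemeasurable
    calc μX {ω | (∀ᶠ t : ℝ≥0 in atTop, BX t ω - φ (t:ℝ) ≤ c) ∧
           (∃ᶠ t : ℝ≥0 in atTop, c' < BX t ω - φ (t:ℝ))}
        ≤ μX ((fun ω => (G ω, F ω)) ⁻¹' S) := measure_mono hsub
      _ = (μX.map (fun ω => (G ω, F ω))) S :=
          (Measure.map_apply (hGm.prodMk hFm) hSmeas).symm
      _ = ((μX.map G).prod (μX.map F)) S := by
          rw [(indepFun_iff_map_prod_eq_prod_map_map hGm.aemeasurable hFm.aemeasurable).mp hindep]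
      _ = ((μX.map G).prod (gaussianReal 0 s)) S := by rw [law_Bs hB s]
      _ = ∫⁻ g, gaussianReal 0 s (Prod.mk g ⁻¹' S) ∂(μX.map G) := Measure.prod_apply hSmeas
      _ ≤ ∫⁻ _, ENNReal.ofReal ((Real.sqrt (2*Real.pi*s))⁻¹)
            * ENNReal.ofReal (2*(c - c')) ∂(μX.map G) := lintegral_mono hslice
      _ = ENNReal.ofReal ((Real.sqrt (2*Real.pi*s))⁻¹) * ENNReal.ofReal (2*(c - c')) := by
          rw [lintegral_const, measure_univ, mul_one]
  -- now take s → ∞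
  have hlim : Tendsto (fun k : ℕ =>
      ENNReal.ofReal ((Real.sqrt (2*Real.pi*((k:ℝ≥0)+1)))⁻¹) * ENNReal.ofReal (2*(c - c')))
      atTop (𝓝 0) := by
    have h1 : Tendsto (fun k : ℕ => (2*Real.pi*(((k:ℝ≥0)+1 : ℝ≥0) : ℝ))) atTop atTop := by
      have h2 : Tendsto (fun k : ℕ => ((k:ℝ)+1)) atTop atTop :=
        tendsto_atTop_add_const_right _ 1 tendsto_natCast_atTop_atTop
      have h3 : Tendsto (fun k : ℕ => 2*Real.pi*((k:ℝ)+1)) atTop atTop :=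
        Tendsto.const_mul_atTop (by positivity) h2
      refine Tendsto.congr (fun k => ?_) h3
      push_cast
      ring
    have hsq : Tendsto Real.sqrt atTop atTop := by
      rw [tendsto_atTop_atTop]
      intro b
      refine ⟨(max b 0)^2, fun a ha => le_trans (le_max_left b 0) ?_⟩
      rw [← Real.sqrt_sq (le_max_right b 0)]
      exact Real.sqrt_le_sqrt ha
    have h4 : Tendsto (fun k : ℕ =>
        (Real.sqrt (2*Real.pi*(((k:ℝ≥0)+1 : ℝ≥0) : ℝ)))⁻¹) atTop (𝓝 0) :=
      (hsq.comp h1).inv_tendsto_atTop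
    have h5 : Tendsto (fun k : ℕ =>
        ENNReal.ofReal ((Real.sqrt (2*Real.pi*(((k:ℝ≥0)+1 : ℝ≥0) : ℝ)))⁻¹)) atTop (𝓝 0) := by
      rw [← ENNReal.ofReal_zero]
      exact ENNReal.tendsto_ofReal h4
    simpa using ENNReal.Tendsto.mul_const (b := ENNReal.ofReal (2*(c - c'))) h5 (Or.inr ENNReal.ofReal_ne_top)
  refine le_antisymm ?_ (by positivity)
  exact ge_of_tendsto' hlim fun k => hKs ((k:ℝ≥0)+1) (by positivity)

lemma eventually_le_measurable (hB : IsBrownianMotion μX BX) {φ : ℝ → ℝ}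
    (hφ : ContinuousOn φ (Ici 0)) (c : ℝ) :
    MeasurableSet {ω | ∀ᶠ t : ℝ≥0 in atTop, BX t ω - φ (t:ℝ) ≤ c} := by
  have hset : {ω | ∀ᶠ t : ℝ≥0 in atTop, BX t ω - φ (t:ℝ) ≤ c}
      = ⋃ m : ℕ, ⋂ n : ℕ,
        {ω | (m:ℝ≥0) ≤ rr 0 n → BX (rr 0 n) ω - φ (rr 0 n) ≤ c} := by
    ext ω
    constructor
    · intro h
      simp only [mem_setOf_eq, eventually_atTop] at h
      obtain ⟨T, hT⟩ := h
      have hTceil : T ≤ (⌈(T:ℝ)⌉₊ : ℝ≥0) := by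
        rw [← NNReal.coe_le_coe]
        exact_mod_cast Nat.le_ceil (T:ℝ)
      exact mem_iUnion.mpr ⟨⌈(T:ℝ)⌉₊, mem_iInter.mpr fun n hn => hT _ (le_trans hTceil hn)⟩
    · intro h
      obtain ⟨m, hm⟩ := mem_iUnion.mp h
      simp only [mem_setOf_eq, eventually_atTop]
      refine ⟨(m:ℝ≥0), fun t ht => ?_⟩
      exact dense_le (cont_sub_phi hφ (hB.cont ω)) 0 (m:ℝ≥0) c
        (fun n hn => mem_iInter.mp hm n hn) t (by positivity) ht
  rw [hset]
  refine MeasurableSet.iUnion fun m => MeasurableSet.iInter fun n => ?_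
  by_cases hmn : (m:ℝ≥0) ≤ rr 0 n
  · simp only [hmn, true_implies]
    exact measurableSet_le ((hB.meas _).sub measurable_const) measurable_const
  · simp only [hmn, false_implies, setOf_true]
    exact MeasurableSet.univ

theorem lower_upper_aux {ΩX : Type*} [MeasurableSpace ΩX] (μX : Measure ΩX) (BX : ℝ≥0 → ΩX → ℝ)
    (hB : IsBrownianMotion μX BX) (φ₁ φ₂ : ℝ → ℝ)
    (hφ₁cont : ContinuousOn φ₁ (Ici 0)) (hφ₂cont : ContinuousOn φ₂ (Ici 0))
    (hφ₁ : μX {ω | ∃ t : ℝ≥0, 0 < t ∧ ∀ s : ℝ≥0, t ≤ s → BX s ω < φ₁ (s : ℝ)} = 0)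
    (hφ₂ : μX {ω | ∃ t : ℝ≥0, 0 < t ∧ ∀ s : ℝ≥0, t ≤ s → BX s ω < φ₂ (s : ℝ)} = 1) :
    (∀ᵐ ω ∂μX, ∀ c : ℝ, ∃ᶠ t : ℝ≥0 in atTop, c < BX t ω - φ₁ (t : ℝ)) ∧
    (∀ᵐ ω ∂μX, Tendsto (fun t : ℝ≥0 => BX t ω - φ₂ (t : ℝ)) atTop atBot) := by
  haveI := hB.isProb
  constructor
  · -- lower function part
    have hA : ∀ n : ℕ, μX {ω | ¬ ∃ᶠ t : ℝ≥0 in atTop, (n:ℝ) < BX t ω - φ₁ (t:ℝ)} = 0 := by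
      intro n
      have hsubset : {ω | ¬ ∃ᶠ t : ℝ≥0 in atTop, (n:ℝ) < BX t ω - φ₁ (t:ℝ)} ⊆
          {ω | (∀ᶠ t : ℝ≥0 in atTop, BX t ω - φ₁ (t:ℝ) ≤ (n:ℝ)) ∧
            (∃ᶠ t : ℝ≥0 in atTop, (-1:ℝ) < BX t ω - φ₁ (t:ℝ))} ∪
          {ω | ∃ t : ℝ≥0, 0 < t ∧ ∀ s : ℝ≥0, t ≤ s → BX s ω < φ₁ (s : ℝ)} := by
        intro ω hω
        simp only [mem_setOf_eq] at hω
        have hev : ∀ᶠ t : ℝ≥0 in atTop, BX t ω - φ₁ (t:ℝ) ≤ (n:ℝ) := by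
          rw [not_frequently] at hω
          exact hω.mono fun t ht => not_lt.mp ht
        by_cases hfreq : ∃ᶠ t : ℝ≥0 in atTop, (-1:ℝ) < BX t ω - φ₁ (t:ℝ)
        · exact Or.inl ⟨hev, hfreq⟩
        · right
          rw [not_frequently] at hfreq
          have hev2 : ∀ᶠ t : ℝ≥0 in atTop, BX t ω - φ₁ (t:ℝ) ≤ -1 :=
            hfreq.mono fun t ht => not_lt.mp ht
          rw [eventually_atTop] at hev2
          obtain ⟨T, hT⟩ := hev2
          refine ⟨T ⊔ 1, lt_of_lt_of_le zero_lt_one le_sup_right, fun s hs => ?_⟩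
          have := hT s (le_trans le_sup_left hs)
          linarith
      refine measure_mono_null hsubset (measure_union_null ?_ hφ₁)
      refine key hB hφ₁cont ?_
      have : (0:ℝ) ≤ (n:ℝ) := Nat.cast_nonneg n
      linarith
    have h2 : ∀ᵐ ω ∂μX, ∀ n : ℕ, ∃ᶠ t : ℝ≥0 in atTop, (n:ℝ) < BX t ω - φ₁ (t:ℝ) := by
      rw [ae_all_iff]
      intro n
      rw [ae_iff]
      exact hA n
    filter_upwards [h2] with ω hω c
    obtain ⟨n, hn⟩ := exists_nat_gt c
    exact (hω n).mono fun t ht => lt_trans hn ht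
  · -- upper function part
    have hA0 : μX {ω | ∀ᶠ t : ℝ≥0 in atTop, BX t ω - φ₂ (t:ℝ) ≤ 0} = 1 := by
      refine le_antisymm prob_le_one ?_
      rw [← hφ₂]
      refine measure_mono fun ω hω => ?_
      obtain ⟨t0, _, hall⟩ := hω
      rw [mem_setOf_eq, eventually_atTop]
      exact ⟨t0, fun s hs => sub_nonpos.mpr (hall s hs).le⟩
    have hA0c : μX {ω | ∀ᶠ t : ℝ≥0 in atTop, BX t ω - φ₂ (t:ℝ) ≤ 0}ᶜ = 0 := by
      rw [measure_compl (eventually_le_measurable hB hφ₂cont 0) (measure_ne_top μX _), hA0,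
        measure_univ]
      simp
    have hkey2 : ∀ n : ℕ, μX {ω | (∀ᶠ t : ℝ≥0 in atTop, BX t ω - φ₂ (t:ℝ) ≤ 0) ∧
        (∃ᶠ t : ℝ≥0 in atTop, (-(n:ℝ)-1) < BX t ω - φ₂ (t:ℝ))} = 0 := by
      intro n
      refine key hB hφ₂cont ?_
      have : (0:ℝ) ≤ n := Nat.cast_nonneg n
      linarith
    have hbad : μX ({ω | ∀ᶠ t : ℝ≥0 in atTop, BX t ω - φ₂ (t:ℝ) ≤ 0}ᶜ ∪
        ⋃ n : ℕ, {ω | (∀ᶠ t : ℝ≥0 in atTop, BX t ω - φ₂ (t:ℝ) ≤ 0) ∧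
          (∃ᶠ t : ℝ≥0 in atTop, (-(n:ℝ)-1) < BX t ω - φ₂ (t:ℝ))}) = 0 :=
      measure_union_null hA0c (measure_iUnion_null hkey2)
    rw [ae_iff]
    refine measure_mono_null ?_ hbad
    intro ω hω
    by_contra hnot
    simp only [mem_union, mem_compl_iff, mem_iUnion, not_or, not_exists, mem_setOf_eq] at hnot
    obtain ⟨hnot1, hnot2⟩ := hnot
    rw [not_not] at hnot1
    refine hω ?_
    rw [tendsto_atBot]
    intro b
    obtain ⟨n, hn⟩ := exists_nat_ge (-b)
    have hev : ∀ᶠ t : ℝ≥0 in atTop, BX t ω - φ₂ (t:ℝ) ≤ -(n:ℝ)-1 := by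
      by_contra hfr
      rw [not_eventually] at hfr
      exact hnot2 n ⟨hnot1, hfr.mono fun t ht => not_le.mp ht⟩
    exact hev.mono fun t ht => by linarith

end AuxNK

/-- Lemma (Limits involving lower and upper functions): if `φ₁` is a continuous lower
function (the event `{B_s < φ₁(s) for all s ≥ t, for some t > 0}` has probability `0`),
then `limsup_{t → ∞} (B_t - φ₁(t)) = ∞` a.s.; if `φ₂` is a continuous upper function
(the corresponding event has probability `1`), then
`limsup_{t → ∞} (B_t - φ₂(t)) = -∞` a.s. -/
theorem lower_upper_function_limits
    {Ω : Type*} [MeasurableSpace Ω] (μ : Measure Ω) (B : ℝ≥0 → Ω → ℝ)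
    (hB : IsBrownianMotion μ B) (φ₁ φ₂ : ℝ → ℝ)
    (hφ₁cont : ContinuousOn φ₁ (Ici 0)) (hφ₂cont : ContinuousOn φ₂ (Ici 0))
    (hφ₁ : μ {ω | ∃ t : ℝ≥0, 0 < t ∧ ∀ s : ℝ≥0, t ≤ s → B s ω < φ₁ (s : ℝ)} = 0)
    (hφ₂ : μ {ω | ∃ t : ℝ≥0, 0 < t ∧ ∀ s : ℝ≥0, t ≤ s → B s ω < φ₂ (s : ℝ)} = 1) :
    (∀ᵐ ω ∂μ, ∀ c : ℝ, ∃ᶠ t : ℝ≥0 in atTop, c < B t ω - φ₁ (t : ℝ)) ∧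
    (∀ᵐ ω ∂μ, Tendsto (fun t : ℝ≥0 => B t ω - φ₂ (t : ℝ)) atTop atBot) :=
  lower_upper_aux μ B hB φ₁ φ₂ hφ₁cont hφ₂cont hφ₁ hφ₂

end PaperNK
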